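/- If N is a normal subgroup of G such that both N ≀ H and (G/N) ≀ H have surjective strategies, then G ≀ H has a surjective strategy. -/

import Mathlib

/-- One step of multiplication in the wreath product `G ≀ H` (base `Ω → G`,
with `H` acting on `Ω`): `(k,h)·(k',h') = (k·(h·k'), hh')`. -/
def wmul {G H Ω : Type*} [Group G] [Group H] [MulAction H Ω]
    (a b : (Ω → G) × H) : (Ω → G) × H :=
  (a.1 * fun ω => b.1 (a.2⁻¹ • ω), a.2 * b.2)

/-- `ks` is a surjective strategy for `G ≀ H`: for every adversarial sequence
`hs` of the same length, the projections to the base `K = Ω → G` of the partial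
products `id, (k₁,h₁), (k₁,h₁)(k₂,h₂), …` cover all of `K`. -/
def IsSurjStrat (G : Type*) [Group G] (H : Type*) [Group H] (Ω : Type*) [MulAction H Ω]
    (ks : List (Ω → G)) : Prop :=
  ∀ hs : List H, hs.length = ks.length →
    ∀ k : Ω → G, k ∈ (((ks.zip hs).scanl wmul 1).map Prod.fst)

/-- The puzzle `G ≀ H` (switches `G` at positions `Ω`, spun by `H`) has a
surjective strategy. -/
def HasSurjStrat (G : Type*) [Group G] (H : Type*) [Group H] (Ω : Type*) [MulAction H Ω] : Prop :=
  ∃ ks : List (Ω → G), IsSurjStrat G H Ω ks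

section Aux

variable {H Ω : Type*} [Group H] [MulAction H Ω]

/-- Product with respect to `wmul`. -/
def wprod {A : Type*} [Group A] (l : List ((Ω → A) × H)) : (Ω → A) × H :=
  l.foldl wmul 1

variable {A B : Type*} [Group A] [Group B]

theorem wmul_assoc (a b c : (Ω → A) × H) : wmul (wmul a b) c = wmul a (wmul b c) := by
  unfold wmul
  refine Prod.ext ?_ (mul_assoc _ _ _)
  funext ω
  simp [mul_assoc, mul_smul]

@[simp] theorem one_wmul (a : (Ω → A) × H) : wmul 1 a = a := by
  unfold wmul
  refine Prod.ext ?_ (one_mul _)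
  funext ω
  simp

@[simp] theorem wmul_one (a : (Ω → A) × H) : wmul a 1 = a := by
  unfold wmul
  refine Prod.ext ?_ (mul_one _)
  funext ω
  simp

theorem wmul_one_h (a : (Ω → A) × H) (h : H) : wmul a (1, h) = (a.1, a.2 * h) := by
  unfold wmul
  refine Prod.ext ?_ rfl
  funext ω
  simp

theorem foldl_wmul (a b : (Ω → A) × H) (l : List ((Ω → A) × H)) :
    l.foldl wmul (wmul a b) = wmul a (l.foldl wmul b) := by
  induction l generalizing b with
  | nil => rfl
  | cons x t ih => simp only [List.foldl_cons, wmul_assoc, ih]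

theorem wprod_cons (a : (Ω → A) × H) (l : List ((Ω → A) × H)) :
    wprod (a :: l) = wmul a (wprod l) := by
  unfold wprod
  rw [List.foldl_cons, show wmul 1 a = wmul a 1 by rw [one_wmul, wmul_one], foldl_wmul]

theorem wprod_append (l₁ l₂ : List ((Ω → A) × H)) :
    wprod (l₁ ++ l₂) = wmul (wprod l₁) (wprod l₂) := by
  induction l₁ with
  | nil => simp [wprod]
  | cons x t ih => simp only [List.cons_append, wprod_cons, ih, wmul_assoc]

theorem wprod_map (f : (Ω → A) × H → (Ω → B) × H) (hf1 : f 1 = 1)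
    (hfm : ∀ a b, f (wmul a b) = wmul (f a) (f b)) (l : List ((Ω → A) × H)) :
    wprod (l.map f) = f (wprod l) := by
  induction l with
  | nil => simp [wprod, hf1]
  | cons x t ih => simp only [List.map_cons, wprod_cons, ih, hfm]

theorem wprod_ones (l : List H) :
    wprod (l.map fun h => ((1 : Ω → A), h)) = (1, l.prod) := by
  induction l with
  | nil => simp [wprod]; rfl
  | cons x t ih =>
    rw [List.map_cons, wprod_cons, ih]
    unfold wmul
    refine Prod.ext ?_ rfl
    funext ω
    simp

/-- Membership in `scanl f b l` is being a fold of some prefix. -/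
theorem mem_scanl_iff {α β : Type*} (f : β → α → β) (b : β) (l : List α) (x : β) :
    x ∈ l.scanl f b ↔ ∃ n, x = (l.take n).foldl f b := by
  induction l generalizing b with
  | nil =>
    simp only [List.scanl_nil, List.mem_singleton, List.take_nil, List.foldl_nil]
    exact ⟨fun h => ⟨0, h⟩, fun ⟨n, h⟩ => h⟩
  | cons a t ih =>
    simp only [List.scanl_cons, List.singleton_append, List.mem_cons, ih]
    constructor
    · rintro (rfl | ⟨n, rfl⟩)
      · exact ⟨0, rfl⟩
      · exact ⟨n + 1, rfl⟩
    · rintro ⟨n, rfl⟩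
      cases n with
      | zero => exact Or.inl rfl
      | succ n => exact Or.inr ⟨n, rfl⟩

/-- Extraction of a surjective strategy in "bounded fold of prefix" form. -/
theorem isSurjStrat_take {G : Type*} [Group G] {ks : List (Ω → G)}
    (hks : IsSurjStrat G H Ω ks) (hs : List H) (hlen : hs.length = ks.length)
    (k : Ω → G) : ∃ n ≤ ks.length, (wprod ((ks.zip hs).take n)).1 = k := by
  have := hks hs hlen k
  rw [List.mem_map] at this
  obtain ⟨p, hp, hp1⟩ := this
  rw [mem_scanl_iff] at hp
  obtain ⟨n, rfl⟩ := hp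
  refine ⟨min n ks.length, min_le_right _ _, ?_⟩
  have hzl : (ks.zip hs).length = ks.length := by
    rw [List.length_zip, hlen, min_self]
  have : (ks.zip hs).take (min n ks.length) = (ks.zip hs).take n := by
    rcases le_total n ks.length with h | h
    · rw [min_eq_left h]
    · rw [min_eq_right h, List.take_of_length_le (by omega), List.take_of_length_le (by omega)]
  rw [this]
  exact hp1

end Aux

section Main

set_option linter.unusedSectionVars false

variable {G H Ω : Type*} [Group G] [Group H] [MulAction H Ω] (N : Subgroup G) [N.Normal]

/-- Embed the base `Ω → N` into `Ω → G`. -/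
def embN (nf : Ω → N) : Ω → G := fun ω => ((nf ω : N) : G)

/-- Lift of a quotient move to `G`. -/
noncomputable def liftQ (q : Ω → G ⧸ N) : Ω → G := fun ω => (q ω).out

/-- Projection of the base to the quotient. -/
def projQ (k : Ω → G) : Ω → G ⧸ N := fun ω => ((k ω : G) : G ⧸ N)

/-- The interleaved strategy. -/
noncomputable def chunk (ns : List (Ω → N)) : List (Ω → G ⧸ N) → List (Ω → G)
  | [] => ns.map (embN N)
  | q :: t => ns.map (embN N) ++ liftQ N q :: chunk ns t

/-- The wreath-multiplication embedding map for `N`. -/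
def embW (p : (Ω → N) × H) : (Ω → G) × H := (embN N p.1, p.2)

/-- The wreath-multiplication projection map to the quotient. -/
def projW (p : (Ω → G) × H) : (Ω → G ⧸ N) × H := (projQ N p.1, p.2)

theorem embW_one : embW (N := N) (H := H) (Ω := Ω) 1 = 1 := by
  refine Prod.ext ?_ rfl
  funext ω
  show ((1 : N) : G) = 1
  simp

theorem embW_wmul (a b : (Ω → N) × H) :
    embW N (wmul a b) = wmul (embW N a) (embW N b) := by
  refine Prod.ext ?_ rfl
  funext ω
  simp [embW, embN, wmul]

theorem projW_one : projW (N := N) (H := H) (Ω := Ω) 1 = 1 := by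
  refine Prod.ext ?_ rfl
  funext ω
  show ((1 : G) : G ⧸ N) = 1
  simp

theorem projW_wmul (a b : (Ω → G) × H) :
    projW N (wmul a b) = wmul (projW N a) (projW N b) := by
  refine Prod.ext ?_ rfl
  funext ω
  simp [projW, projQ, wmul]

theorem projW_embW (p : (Ω → N) × H) : projW N (embW N p) = ((1 : Ω → G ⧸ N), p.2) := by
  refine Prod.ext ?_ rfl
  funext ω
  simp only [projW, projQ, embW, embN, Pi.one_apply]
  exact (QuotientGroup.eq_one_iff _).2 (p.1 ω).2

theorem projW_liftQ (q : Ω → G ⧸ N) (h : H) :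
    projW N (liftQ N q, h) = (q, h) := by
  refine Prod.ext ?_ rfl
  funext ω
  simp only [projW, projQ, liftQ]
  exact Quotient.out_eq _

theorem projW_oneh (h : H) :
    projW N ((1 : Ω → G), h) = ((1 : Ω → G ⧸ N), h) := by
  refine Prod.ext ?_ rfl
  funext ω
  show ((1 : G) : G ⧸ N) = 1
  simp

theorem chunk_length (ns : List (Ω → N)) (qs : List (Ω → G ⧸ N)) :
    (chunk N ns qs).length = ns.length + (ns.length + 1) * qs.length := by
  induction qs with
  | nil => simp [chunk]
  | cons q t ih =>
    show (ns.map (embN N) ++ liftQ N q :: chunk N ns t).length = _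
    simp [ih]
    ring

/-- The block lemma: from state `P`, against adversary `hB`, the partial
products during a block cover the whole coset of `P.1`. -/
theorem block_lemma {ns : List (Ω → N)} (hns : IsSurjStrat N H Ω ns)
    (P : (Ω → G) × H) (hB : List H) (hlen : hB.length = ns.length) (k : Ω → G)
    (hk : projQ N k = projQ N P.1) :
    ∃ n ≤ ns.length, (wmul P (wprod (((ns.map (embN N)).zip hB).take n))).1 = k := by
  have hmem : ∀ ω, (P.1 (P.2 • ω))⁻¹ * k (P.2 • ω) ∈ N := by
    intro ω
    have := congrFun hk (P.2 • ω)
    simp only [projQ] at this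
    exact (QuotientGroup.eq).1 this.symm
  set nn : Ω → N := fun ω => ⟨(P.1 (P.2 • ω))⁻¹ * k (P.2 • ω), hmem ω⟩ with hnn
  obtain ⟨n, hn, hval⟩ := isSurjStrat_take hns hB hlen nn
  refine ⟨n, hn, ?_⟩
  have hzip : (ns.map (embN N)).zip hB = (ns.zip hB).map (embW N) := by
    rw [List.zip_map_left]; rfl
  rw [hzip, ← List.map_take, wprod_map (embW N) (embW_one N) (embW_wmul N)]
  funext ω
  have hv : (wprod ((ns.zip hB).take n)).1 = nn := hval
  simp only [wmul, embW, embN, Pi.mul_apply, hv, hnn]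
  simp [mul_assoc]

/-- Main interleaving lemma. -/
theorem main_lemma {ns : List (Ω → N)} (hns : IsSurjStrat N H Ω ns)
    (qs : List (Ω → G ⧸ N)) :
    ∀ hs : List H, hs.length = (chunk N ns qs).length →
    ∃ h' : List H, h'.length = qs.length ∧
      ∀ (P : (Ω → G) × H) (k : Ω → G),
        (∃ m, (wmul (projW N (wmul P ((1 : Ω → G), (hs.take ns.length).prod)))
            (wprod ((qs.zip h').take m))).1 = projQ N k) →
        ∃ n, (wmul P (wprod (((chunk N ns qs).zip hs).take n))).1 = k := by
  induction qs with
  | nil =>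
    intro hs hlen
    refine ⟨[], rfl, ?_⟩
    intro P k hcond
    obtain ⟨m, hm⟩ := hcond
    simp only [List.zip_nil_left, List.take_nil] at hm
    have hm' : (projW N P).1 = projQ N k := by
      rw [show wprod ([] : List ((Ω → G ⧸ N) × H)) = 1 from rfl, wmul_one] at hm
      rw [projW_wmul, projW_oneh, wmul_one_h] at hm
      exact hm
    have hlen' : hs.length = ns.length := by simpa [chunk] using hlen
    obtain ⟨n, _, hval⟩ := block_lemma N hns P hs hlen' k hm'.symm
    exact ⟨n, by simpa [chunk] using hval⟩
  | cons q t ih =>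
    intro hs hlen
    have hlen2 : hs.length = ns.length + ((chunk N ns t).length + 1) := by
      simpa [chunk] using hlen
    have hsplit : ∃ hB h hs'', hs = hB ++ h :: hs'' ∧ hB.length = ns.length ∧
        hs''.length = (chunk N ns t).length := by
      have hne : hs.drop ns.length ≠ [] := by
        intro hcon
        have := congrArg List.length hcon
        simp only [List.length_drop, List.length_nil] at this
        omega
      obtain ⟨h, hs'', hcons⟩ := List.exists_cons_of_ne_nil hne
      have hlt : (hs.take ns.length).length = ns.length := by rw [List.length_take]; omega
      have hl2 : hs''.length = (chunk N ns t).length := by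
        have := congrArg List.length hcons
        simp only [List.length_drop, List.length_cons] at this
        omega
      exact ⟨hs.take ns.length, h, hs'', by rw [← hcons, List.take_append_drop], hlt, hl2⟩
    obtain ⟨hB, h, hs'', rfl, hBlen, hs''len⟩ := hsplit
    obtain ⟨h'', h''len, h''prop⟩ := ih hs'' hs''len
    set A₁ : H := (hs''.take ns.length).prod with hA₁
    refine ⟨(h * A₁) :: h'', by simp [h''len], ?_⟩
    intro P k hcond
    obtain ⟨m, hm⟩ := hcond
    set B : List (Ω → G) := ns.map (embN N) with hBdef
    have hBlen' : B.length = ns.length := by simp [hBdef]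
    have htake : (hB ++ h :: hs'').take ns.length = hB := by
      rw [← hBlen, List.take_left]
    set A₀ : H := hB.prod with hA₀
    -- projection of the block product
    set Wblk : (Ω → G) × H := wprod (B.zip hB) with hWblk
    have hprojblk : projW N Wblk = ((1 : Ω → G ⧸ N), A₀) := by
      rw [hWblk, hBdef, List.zip_map_left,
        show List.map (Prod.map (embN N) id) (ns.zip hB) = (ns.zip hB).map (embW N) from rfl,
        wprod_map (embW N) (embW_one N) (embW_wmul N)]
      rw [projW_embW]
      congr 1
      have hsnd : ∀ (l : List ((Ω → ↥N) × H)), (wprod l).2 = (l.map Prod.snd).prod := by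
        intro l
        induction l with
        | nil => rfl
        | cons x tl ihl => simp [wprod_cons, wmul, ihl]
      rw [hsnd, List.map_snd_zip (show hB.length ≤ ns.length by omega)]
    -- zip of the chunk
    have hzipchunk : (chunk N ns (q :: t)).zip (hB ++ h :: hs'') =
        (B.zip hB) ++ (liftQ N q, h) :: ((chunk N ns t).zip hs'') := by
      show (B ++ liftQ N q :: chunk N ns t).zip (hB ++ h :: hs'') = _
      rw [List.zip_append (by omega)]
      rfl
    cases m with
    | zero =>
      -- k is in the coset of P.1 : covered within the initial block
      simp only [List.take_zero] at hm
      rw [show wprod ([] : List ((Ω → G ⧸ N) × H)) = 1 from rfl, wmul_one,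
        projW_wmul, projW_oneh, wmul_one_h] at hm
      obtain ⟨n, hn, hval⟩ := block_lemma N hns P hB (by omega) k (by exact hm.symm)
      refine ⟨n, ?_⟩
      rw [hzipchunk, List.take_append,
        show n - (B.zip hB).length = 0 by rw [List.length_zip]; omega,
        List.take_zero, List.append_nil]
      exact hval
    | succ j =>
      -- recurse with the state updated past the block and the lifted move
      set P' : (Ω → G) × H := wmul (wmul P Wblk) (liftQ N q, h) with hP'
      have e1 : projW N (wmul P' ((1 : Ω → G), (hs''.take ns.length).prod)) =
          wmul (wmul (wmul (projW N P) ((1 : Ω → G ⧸ N), A₀)) (q, h))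
            ((1 : Ω → G ⧸ N), A₁) := by
        rw [hP', projW_wmul, projW_wmul, projW_wmul, hprojblk, projW_liftQ, projW_oneh, ← hA₁]
      have e2 : projW N (wmul P ((1 : Ω → G),
          (List.take ns.length (hB ++ h :: hs'')).prod)) =
          wmul (projW N P) ((1 : Ω → G ⧸ N), A₀) := by
        rw [projW_wmul, projW_oneh, htake, ← hA₀]
      have hcond' : ∃ m', (wmul (projW N (wmul P' ((1 : Ω → G), (hs''.take ns.length).prod)))
          (wprod ((t.zip h'').take m'))).1 = projQ N k := by
        refine ⟨j, ?_⟩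
        rw [← hm]
        have lhs_eq : ((q :: t).zip ((h * A₁) :: h'')).take (j + 1) =
            (q, h * A₁) :: ((t.zip h'').take j) := rfl
        rw [lhs_eq, wprod_cons]
        congr 1
        rw [e1, e2,
          wmul_assoc (wmul (projW N P) ((1 : Ω → G ⧸ N), A₀)) (q, h) ((1 : Ω → G ⧸ N), A₁),
          wmul_one_h, wmul_assoc, wmul_one_h]
      obtain ⟨n', hn'⟩ := h''prop P' k hcond'
      refine ⟨(B.zip hB).length + 1 + n', ?_⟩
      rw [hzipchunk, List.take_append,
        List.take_of_length_le (by omega),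
        show (B.zip hB).length + 1 + n' - (B.zip hB).length = n' + 1 by omega]
      rw [show ((liftQ N q, h) :: ((chunk N ns t).zip hs'')).take (n' + 1) =
        (liftQ N q, h) :: (((chunk N ns t).zip hs'').take n') from rfl]
      rw [wprod_append, wprod_cons, ← wmul_assoc, ← wmul_assoc]
      exact hn'

end Main

/-- strategy decomposition via a normal subgroup N ⊴ G. -/
theorem stmt4 {G H Ω : Type*} [Group G] [Group H] [MulAction H Ω]
    [Fintype Ω] [Finite G] [Finite H] [FaithfulSMul H Ω]
    (N : Subgroup G) [N.Normal]
    (h1 : HasSurjStrat N H Ω) (h2 : HasSurjStrat (G ⧸ N) H Ω) :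
    HasSurjStrat G H Ω := by
  obtain ⟨ns, hns⟩ := h1
  obtain ⟨qs, hqs⟩ := h2
  refine ⟨chunk N ns qs, ?_⟩
  intro hs hlen k
  obtain ⟨h', h'len, h'prop⟩ := main_lemma N hns qs hs hlen
  -- quotient strategy coverage
  set A₀ : H := (hs.take ns.length).prod with hA₀
  obtain ⟨m, _, hmval⟩ := isSurjStrat_take hqs h' (by omega)
    (fun ω => ((k (A₀ • ω) : G) : G ⧸ N))
  have hcond : ∃ m, (wmul (projW N (wmul 1 ((1 : Ω → G), A₀)))
      (wprod ((qs.zip h').take m))).1 = projQ N k := by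
    refine ⟨m, ?_⟩
    rw [one_wmul]
    have h1A : projW N ((1 : Ω → G), A₀) = ((1 : Ω → G ⧸ N), A₀) := by
      refine Prod.ext ?_ rfl
      funext ω
      show ((1 : G) : G ⧸ N) = 1
      simp
    rw [h1A]
    funext ω
    simp only [wmul, Pi.mul_apply, Pi.one_apply, one_mul]
    rw [hmval]
    simp [projQ]
  obtain ⟨n, hn⟩ := h'prop 1 k hcond
  rw [one_wmul] at hn
  rw [List.mem_map]
  refine ⟨wprod (((chunk N ns qs).zip hs).take n), ?_, hn⟩
  rw [mem_scanl_iff]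
  exact ⟨n, rfl⟩
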